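/- Let (X,d) be a compact metric space with Lipschitz seminorm L on real continuous functions, and let S be any seminorm on the space of Lipschitz functions that is lower semicontinuous with respect to the sup-norm and vanishes on constants. Then there exists C > 0 such that S(f) ≤ C·L(f) for every Lipschitz function f. -/

import Mathlib

open scoped ENNReal
open Filter
open scoped BoundedContinuousFunction

/-- The Lipschitz seminorm of `f : X → ℝ`, allowing the value `∞`. -/
noncomputable def Lip {X : Type*} [MetricSpace X] (f : X → ℝ) : ℝ≥0∞ :=
  ⨆ (x : X) (y : X) (_ : x ≠ y), edist (f x) (f y) / edist x y

set_option maxHeartbeats 1000000 in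
set_option synthInstance.maxHeartbeats 400000 in
/-- On a compact metric space, any seminorm `S` on functions which is lower
semicontinuous for uniform convergence and vanishes on constants is dominated
by a constant multiple of the Lipschitz seminorm: there is `C > 0` with
`S(f) ≤ C·L(f)` for every Lipschitz `f`. -/
theorem seminorm_dominated_by_lip {X : Type*} [MetricSpace X] [CompactSpace X]
    (S : (X → ℝ) → ℝ)
    (hnn : ∀ f : X → ℝ, 0 ≤ S f)
    (hadd : ∀ f g : X → ℝ, S (f + g) ≤ S f + S g)
    (hsmul : ∀ (c : ℝ) (f : X → ℝ), S (c • f) = |c| * S f)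
    (hconst : ∀ c : ℝ, S (fun _ => c) = 0)
    (hlsc : ∀ (f : ℕ → X → ℝ) (g : X → ℝ) (c : ℝ),
      TendstoUniformly f g atTop → (∀ n, S (f n) ≤ c) → S g ≤ c) :
    ∃ C : ℝ, 0 < C ∧ ∀ f : X → ℝ, Lip f ≠ ⊤ →
      ENNReal.ofReal (S f) ≤ ENNReal.ofReal C * Lip f := by
  rcases isEmpty_or_nonempty X with hX | hX
  · refine ⟨1, one_pos, fun f _ => ?_⟩
    have hf0 : f = fun _ => (0 : ℝ) := funext fun x => (IsEmpty.false x).elim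
    rw [hf0, hconst]
    simp
  obtain ⟨x₀⟩ := hX
  set D := Metric.diam (Set.univ : Set X) with hD
  set K : Set (X →ᵇ ℝ) := {f | LipschitzWith 1 ⇑f ∧ f x₀ = 0} with hK
  have hmemD : ∀ f ∈ K, ∀ x : X, f x ∈ Metric.closedBall (0:ℝ) D := by
    intro f hf x
    rw [Metric.mem_closedBall]
    calc dist (f x) 0 = dist (f x) (f x₀) := by rw [hf.2]
    _ ≤ dist x x₀ := by simpa using hf.1.dist_le_mul x x₀
    _ ≤ D := Metric.dist_le_diam_of_mem isCompact_univ.isBounded trivial trivial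
  have hKcl : IsClosed K := by
    have h1 : IsClosed {f : X →ᵇ ℝ | LipschitzWith 1 ⇑f} := by
      have : {f : X →ᵇ ℝ | LipschitzWith 1 ⇑f}
          = ⋂ (x : X) (y : X), {f : X →ᵇ ℝ | dist (f x) (f y) ≤ dist x y} := by
        ext f
        simp only [Set.mem_setOf_eq, Set.mem_iInter, lipschitzWith_iff_dist_le_mul,
          NNReal.coe_one, one_mul]
      rw [this]
      exact isClosed_iInter fun x => isClosed_iInter fun y =>
        isClosed_le (by continuity) (by continuity)
    exact h1.inter (isClosed_eq (by continuity) continuous_const)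
  have hKcomp : IsCompact K := by
    refine BoundedContinuousFunction.arzela_ascoli₂ (Metric.closedBall 0 D)
      (isCompact_closedBall 0 D) K hKcl (fun f x hf => hmemD f hf x) ?_
    refine Metric.equicontinuous_of_continuity_modulus id tendsto_id _ ?_
    intro x y f
    simpa using f.2.1.dist_le_mul x y
  haveI : CompactSpace K := isCompact_iff_compactSpace.1 hKcomp
  haveI : Nonempty K := ⟨⟨0, (LipschitzWith.const (0:ℝ)).weaken zero_le_one, rfl⟩⟩
  -- Baire category argument
  have hclosed : ∀ n : ℕ, IsClosed {g : K | S ⇑(g : X →ᵇ ℝ) ≤ (n : ℝ)} := by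
    intro n
    refine IsSeqClosed.isClosed ?_
    intro u g hu hug
    refine hlsc (fun k => ⇑(u k : X →ᵇ ℝ)) ⇑(g : X →ᵇ ℝ) n ?_ hu
    rw [← BoundedContinuousFunction.tendsto_iff_tendstoUniformly]
    exact (continuous_subtype_val.tendsto g).comp hug
  have hcover : (⋃ n : ℕ, {g : K | S ⇑(g : X →ᵇ ℝ) ≤ (n : ℝ)}) = Set.univ := by
    ext g
    simp only [Set.mem_iUnion, Set.mem_setOf_eq, Set.mem_univ, iff_true]
    exact exists_nat_ge _
  obtain ⟨n, hn⟩ := nonempty_interior_of_iUnion_of_closed hclosed hcover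
  obtain ⟨f₀, hf₀⟩ := hn
  have hSf₀ : S ⇑(f₀ : X →ᵇ ℝ) ≤ (n : ℝ) := by
    have h := interior_subset hf₀
    exact h
  obtain ⟨ε, hε, hball⟩ := Metric.mem_nhds_iff.1 (mem_interior_iff_mem_nhds.1 hf₀)
  set M : ℝ := 2 * D + 1 with hM
  have hDpos : 0 ≤ D := Metric.diam_nonneg
  have hMpos : 0 < M := by positivity
  have hnormK : ∀ g ∈ K, ‖g‖ ≤ D := by
    intro g hg
    refine BoundedContinuousFunction.norm_le hDpos |>.2 fun x => ?_
    simpa [Real.norm_eq_abs, Real.dist_eq] using hmemD g hg x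
  set t : ℝ := min (ε / (2 * M)) 1 with ht
  have htpos : 0 < t := lt_min (by positivity) one_pos
  have ht1 : t ≤ 1 := min_le_right _ _
  set C₀ : ℝ := 2 * n / t with hC₀def
  have hnnn : (0:ℝ) ≤ n := le_trans (hnn _) hSf₀
  have hC₀nn : 0 ≤ C₀ := div_nonneg (by positivity) htpos.le
  have hbound : ∀ h ∈ K, S ⇑h ≤ C₀ := by
    intro h hh
    set g' : X →ᵇ ℝ := (f₀ : X →ᵇ ℝ) + t • (h - (f₀ : X →ᵇ ℝ)) with hg'
    have hg'x : ∀ x : X, g' x = (f₀ : X →ᵇ ℝ) x + t * (h x - (f₀ : X →ᵇ ℝ) x) := by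
      intro x; simp [hg']
    have hg'K : g' ∈ K := by
      constructor
      · refine LipschitzWith.of_dist_le_mul fun x y => ?_
        have hf₀L : dist ((f₀ : X →ᵇ ℝ) x) ((f₀ : X →ᵇ ℝ) y) ≤ dist x y := by
          simpa using f₀.2.1.dist_le_mul x y
        have hhL : dist (h x) (h y) ≤ dist x y := by
          simpa using hh.1.dist_le_mul x y
        rw [NNReal.coe_one, one_mul, Real.dist_eq, hg'x, hg'x]
        rw [Real.dist_eq] at hf₀L hhL
        have key : (f₀ : X →ᵇ ℝ) x + t * (h x - (f₀ : X →ᵇ ℝ) x)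
            - ((f₀ : X →ᵇ ℝ) y + t * (h y - (f₀ : X →ᵇ ℝ) y))
            = (1 - t) * ((f₀ : X →ᵇ ℝ) x - (f₀ : X →ᵇ ℝ) y) + t * (h x - h y) := by ring
        rw [key]
        calc |(1 - t) * ((f₀ : X →ᵇ ℝ) x - (f₀ : X →ᵇ ℝ) y) + t * (h x - h y)|
            ≤ |(1 - t) * ((f₀ : X →ᵇ ℝ) x - (f₀ : X →ᵇ ℝ) y)| + |t * (h x - h y)| :=
              abs_add_le _ _
        _ = (1 - t) * |(f₀ : X →ᵇ ℝ) x - (f₀ : X →ᵇ ℝ) y| + t * |h x - h y| := by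
            rw [abs_mul, abs_mul, abs_of_nonneg (by linarith : (0:ℝ) ≤ 1 - t),
              abs_of_nonneg htpos.le]
        _ ≤ (1 - t) * dist x y + t * dist x y :=
            add_le_add (mul_le_mul_of_nonneg_left hf₀L (by linarith))
              (mul_le_mul_of_nonneg_left hhL htpos.le)
        _ = dist x y := by ring
      · show g' x₀ = 0
        rw [hg'x, f₀.2.2, hh.2]
        ring
    have hdist : dist g' (f₀ : X →ᵇ ℝ) < ε := by
      have hle : dist g' (f₀ : X →ᵇ ℝ) ≤ ε / 2 := by
        refine BoundedContinuousFunction.dist_le (by positivity) |>.2 fun x => ?_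
        rw [Real.dist_eq, hg'x]
        have h1 : |h x| ≤ D := by simpa [Real.dist_eq] using hmemD h hh x
        have h2 : |(f₀ : X →ᵇ ℝ) x| ≤ D := by simpa [Real.dist_eq] using hmemD _ f₀.2 x
        have hxx : (f₀ : X →ᵇ ℝ) x + t * (h x - (f₀ : X →ᵇ ℝ) x) - (f₀ : X →ᵇ ℝ) x
            = t * (h x - (f₀ : X →ᵇ ℝ) x) := by ring
        rw [hxx, abs_mul, abs_of_nonneg htpos.le]
        have h3 : |h x - (f₀ : X →ᵇ ℝ) x| ≤ M := by
          have h4 : |h x - (f₀ : X →ᵇ ℝ) x| ≤ |h x| + |(f₀ : X →ᵇ ℝ) x| := by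
            simpa [sub_eq_add_neg] using abs_add_le (h x) (-((f₀ : X →ᵇ ℝ) x))
          rw [hM]; linarith
        calc t * |h x - (f₀ : X →ᵇ ℝ) x| ≤ (ε / (2 * M)) * M :=
            mul_le_mul (min_le_left _ _) h3 (abs_nonneg _) (by positivity)
        _ = ε / 2 := by field_simp
      linarith
    have hSg' : S ⇑g' ≤ (n : ℝ) := by
      have hmem : (⟨g', hg'K⟩ : K) ∈ Metric.ball f₀ ε := by
        rw [Metric.mem_ball, Subtype.dist_eq]
        exact hdist
      exact hball hmem
    have hdecomp : t • ⇑h = ⇑g' + (t - 1) • ⇑(f₀ : X →ᵇ ℝ) := by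
      funext x
      simp only [Pi.add_apply, Pi.smul_apply, smul_eq_mul, hg'x]
      ring
    have h2 : S (t • ⇑h) ≤ 2 * n := by
      rw [hdecomp]
      calc S (⇑g' + (t - 1) • ⇑(f₀ : X →ᵇ ℝ))
          ≤ S ⇑g' + S ((t - 1) • ⇑(f₀ : X →ᵇ ℝ)) := hadd _ _
      _ = S ⇑g' + |t - 1| * S ⇑(f₀ : X →ᵇ ℝ) := by rw [hsmul]
      _ ≤ n + 1 * n := by
          refine add_le_add hSg' (mul_le_mul ?_ hSf₀ (hnn _) one_pos.le)
          rw [abs_of_nonpos (by linarith)]; linarith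
      _ = 2 * n := by ring
    rw [hsmul, abs_of_nonneg htpos.le] at h2
    rw [hC₀def, le_div_iff₀ htpos]
    linarith
  -- conclusion
  refine ⟨C₀ + 1, by linarith, fun f hf => ?_⟩
  have hLip : ∀ x y : X, edist (f x) (f y) ≤ Lip f * edist x y := by
    intro x y
    rcases eq_or_ne x y with rfl | hxy
    · simp
    · have h1 : edist (f x) (f y) / edist x y ≤ Lip f := by
        unfold Lip
        exact le_iSup_of_le x (le_iSup_of_le y (le_iSup_of_le hxy le_rfl))
      rwa [ENNReal.div_le_iff_le_mul (Or.inl (edist_pos.2 hxy).ne')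
        (Or.inl (edist_ne_top x y))] at h1
  by_cases hf0 : Lip f = 0
  · have hcx : ∀ x, f x = f x₀ := by
      intro x
      have := hLip x x₀
      rw [hf0, zero_mul, nonpos_iff_eq_zero, edist_eq_zero] at this
      exact this
    rw [funext hcx, hconst]
    simp
  · set ℓ := (Lip f).toReal with hℓ
    have hℓpos : 0 < ℓ := ENNReal.toReal_pos hf0 hf
    have hofℓ : ENNReal.ofReal ℓ = Lip f := ENNReal.ofReal_toReal hf
    have hfd : ∀ x y : X, dist (f x) (f y) ≤ ℓ * dist x y := by
      intro x y
      have h1 := hLip x y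
      rw [← hofℓ, edist_dist, edist_dist, ← ENNReal.ofReal_mul hℓpos.le] at h1
      exact (ENNReal.ofReal_le_ofReal_iff (by positivity)).1 h1
    have hfc : Continuous f := by
      refine LipschitzWith.continuous (K := ℓ.toNNReal) ?_
      refine LipschitzWith.of_dist_le_mul fun x y => ?_
      rw [Real.coe_toNNReal ℓ hℓpos.le]
      exact hfd x y
    have hgc : Continuous fun x => (f x - f x₀) / ℓ :=
      (hfc.sub continuous_const).div_const ℓ
    set g : X →ᵇ ℝ := BoundedContinuousFunction.mkOfCompact ⟨_, hgc⟩ with hgdef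
    have hgx : ∀ x, g x = (f x - f x₀) / ℓ := fun x => rfl
    have hgK : g ∈ K := by
      constructor
      · refine LipschitzWith.of_dist_le_mul fun x y => ?_
        rw [NNReal.coe_one, one_mul, Real.dist_eq, hgx, hgx]
        have key : (f x - f x₀) / ℓ - (f y - f x₀) / ℓ = (f x - f y) / ℓ := by
          field_simp
          ring
        rw [key, abs_div, abs_of_nonneg hℓpos.le, div_le_iff₀ hℓpos, mul_comm]
        have := hfd x y
        rw [Real.dist_eq] at this
        exact this
      · show g x₀ = 0
        rw [hgx]
        simp
    have hSg : S ⇑g ≤ C₀ := hbound g hgK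
    have hfeq : f = ℓ • ⇑g + (fun _ => f x₀) := by
      funext x
      simp only [Pi.add_apply, Pi.smul_apply, smul_eq_mul, hgx]
      field_simp
      ring
    have hSf : S f ≤ ℓ * C₀ := by
      calc S f = S (ℓ • ⇑g + fun _ => f x₀) := by rw [← hfeq]
      _ ≤ S (ℓ • ⇑g) + S (fun _ => f x₀) := hadd _ _
      _ = |ℓ| * S ⇑g + 0 := by rw [hsmul, hconst]
      _ ≤ ℓ * C₀ := by
          rw [abs_of_nonneg hℓpos.le, add_zero]
          exact mul_le_mul_of_nonneg_left hSg hℓpos.le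
    calc ENNReal.ofReal (S f) ≤ ENNReal.ofReal ((C₀ + 1) * ℓ) :=
          ENNReal.ofReal_le_ofReal (by nlinarith)
    _ = ENNReal.ofReal (C₀ + 1) * ENNReal.ofReal ℓ :=
          ENNReal.ofReal_mul (by linarith)
    _ = ENNReal.ofReal (C₀ + 1) * Lip f := by rw [hofℓ]
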